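/- Any solution y: (0,∞) → ℝ of the modified Bessel equation (r d/dr)² y − (r² + μ²) y = 0 with μ ≥ 0 that satisfies ∫₀^∞ |r^{-δ} y(r)|² dr/r < ∞ for some δ > −2 is identically zero. -/

import Mathlib

open MeasureTheory Set

lemma my_persist (u v g : ℝ → ℝ) (hu : ∀ t, HasDerivAt u (v t) t)
    (hv : ∀ t, HasDerivAt v (g t * u t) t) (hg : ∀ t, 0 ≤ g t)
    (a c : ℝ) (hc : 0 < c) (hua : c ≤ u a) (hva : 0 ≤ v a) :
    ∀ t, a ≤ t → c ≤ u t ∧ 0 ≤ v t := by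
  by_contra h
  push_neg at h
  obtain ⟨t₁, hat₁, hbad⟩ := h
  set B : Set ℝ := {s | a ≤ s ∧ (u s < c ∨ v s < 0)} with hB
  have hBne : B.Nonempty := by
    refine ⟨t₁, hat₁, ?_⟩
    by_cases h1 : c ≤ u t₁
    · exact Or.inr (hbad h1)
    · exact Or.inl (lt_of_not_ge h1)
  have hBbd : BddBelow B := ⟨a, fun s hs => hs.1⟩
  set m := sInf B with hm
  have ham : a ≤ m := le_csInf hBne fun s hs => hs.1
  have hgood : ∀ s, a ≤ s → s < m → c ≤ u s ∧ 0 ≤ v s := by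
    intro s has hsm
    by_contra hcon
    rw [not_and_or, not_le, not_le] at hcon
    exact absurd (csInf_le hBbd ⟨has, hcon⟩) (not_le.2 hsm)
  -- u m ≥ c and v m ≥ 0
  have hum : c ≤ u m ∧ 0 ≤ v m := by
    rcases eq_or_lt_of_le ham with heq | hlt
    · exact heq ▸ ⟨hua, hva⟩
    · have hne : (nhdsWithin m (Iio m)).NeBot := nhdsLT_neBot m
      have hev : ∀ᶠ s in nhdsWithin m (Iio m), c ≤ u s ∧ 0 ≤ v s := by
        have hmem : Ioo a m ∈ nhdsWithin m (Iio m) :=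
          Ioo_mem_nhdsLT hlt
        filter_upwards [hmem] with s hs
        exact hgood s hs.1.le hs.2
      constructor
      · exact ge_of_tendsto ((hu m).continuousAt.continuousWithinAt.tendsto)
          (hev.mono fun s hs => hs.1)
      · exact ge_of_tendsto ((hv m).continuousAt.continuousWithinAt.tendsto)
          (hev.mono fun s hs => hs.2)
  -- positivity of u on a small right interval
  have hucont : ContinuousAt u m := (hu m).continuousAt
  have hpos : ∀ᶠ x in nhds m, 0 < u x :=
    continuousAt_const.eventually_lt hucont (by linarith [hum.1])
  obtain ⟨ε, hε, hball⟩ := Metric.eventually_nhds_iff_ball.1 hpos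
  set η := ε / 2 with hη
  have hηpos : 0 < η := by positivity
  have hIball : Icc m (m + η) ⊆ Metric.ball m ε := by
    intro x hx
    rw [Metric.mem_ball, Real.dist_eq, abs_lt]
    constructor <;> [linarith [hx.1]; linarith [hx.2]]
  have huposI : ∀ x ∈ Icc m (m + η), 0 < u x := fun x hx => hball x (hIball hx)
  -- v monotone on the interval
  have hvmono : MonotoneOn v (Icc m (m + η)) := by
    apply monotoneOn_of_deriv_nonneg (convex_Icc _ _)
      (fun x _ => (hv x).continuousAt.continuousWithinAt)
      (fun x _ => ((hv x).differentiableAt).differentiableWithinAt)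
    intro x hx
    rw [interior_Icc] at hx
    rw [(hv x).deriv]
    exact mul_nonneg (hg x) (huposI x ⟨hx.1.le, hx.2.le⟩).le
  have hvI : ∀ x ∈ Icc m (m + η), 0 ≤ v x := fun x hx =>
    hum.2.trans (hvmono (left_mem_Icc.2 (by linarith)) hx hx.1)
  have humono : MonotoneOn u (Icc m (m + η)) := by
    apply monotoneOn_of_deriv_nonneg (convex_Icc _ _)
      (fun x _ => (hu x).continuousAt.continuousWithinAt)
      (fun x _ => ((hu x).differentiableAt).differentiableWithinAt)
    intro x hx
    rw [interior_Icc] at hx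
    rw [(hu x).deriv]
    exact hvI x ⟨hx.1.le, hx.2.le⟩
  have huI : ∀ x ∈ Icc m (m + η), c ≤ u x := fun x hx =>
    hum.1.trans (humono (left_mem_Icc.2 (by linarith)) hx hx.1)
  -- contradiction with sInf
  obtain ⟨b, hbB, hbm⟩ := exists_lt_of_csInf_lt hBne (show m < m + η by linarith)
  have hbge : m ≤ b := csInf_le hBbd hbB
  have hbI : b ∈ Icc m (m + η) := ⟨hbge, hbm.le⟩
  rcases hbB.2 with h1 | h2
  · exact absurd (huI b hbI) (not_le.2 h1)
  · exact absurd (hvI b hbI) (not_le.2 h2)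

lemma my_grow (u v g : ℝ → ℝ) (hu : ∀ t, HasDerivAt u (v t) t)
    (hv : ∀ t, HasDerivAt v (g t * u t) t) (hg : ∀ t, 0 ≤ g t)
    (k a c : ℝ) (hk : 0 < k) (hgk : ∀ t, a ≤ t → k ^ 2 ≤ g t)
    (hc : 0 < c) (hua : c ≤ u a) (hva : 0 ≤ v a) :
    ∀ t, a ≤ t → c / 2 * Real.exp (k * (t - a)) ≤ u t := by
  have hp := my_persist u v g hu hv hg a c hc hua hva
  -- F t = exp(-k t) * (v t + k * u t) is monotone on Ici a
  set F : ℝ → ℝ := fun t => Real.exp (-k * t) * (v t + k * u t) with hF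
  have hFd : ∀ t, HasDerivAt F
      (Real.exp (-k * t) * (g t * u t + k * v t) + (-k) * Real.exp (-k * t) * (v t + k * u t)) t := by
    intro t
    have h1 : HasDerivAt (fun t => Real.exp (-k * t)) (-k * Real.exp (-k * t)) t := by
      have := (Real.hasDerivAt_exp (-k * t)).comp t ((hasDerivAt_id t).const_mul (-k))
      simpa [Function.comp_def, mul_comm] using this
    have h2 : HasDerivAt (fun t => v t + k * u t) (g t * u t + k * v t) t :=
      (hv t).add ((hu t).const_mul k)
    have := h1.mul h2
    exact this.congr_deriv (by ring)
  have hFmono : MonotoneOn F (Ici a) := by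
    apply monotoneOn_of_deriv_nonneg (convex_Ici a)
      (fun t _ => (hFd t).continuousAt.continuousWithinAt)
      (fun t _ => (hFd t).differentiableAt.differentiableWithinAt)
    intro t ht
    rw [interior_Ici] at ht
    rw [(hFd t).deriv]
    have hut := (hp t (le_of_lt ht)).1
    have hvt := (hp t (le_of_lt ht)).2
    have hgt := hgk t (le_of_lt ht)
    have he : 0 < Real.exp (-k * t) := Real.exp_pos _
    have : g t * u t ≥ k ^ 2 * u t := mul_le_mul_of_nonneg_right hgt (by linarith) 
    nlinarith [Real.exp_pos (-k * t)]
  have hW : ∀ t, a ≤ t → k * c * Real.exp (k * (t - a)) ≤ v t + k * u t := by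
    intro t ht
    have hFle : F a ≤ F t := hFmono (le_refl a) ht ht
    have hFa : Real.exp (-k * a) * (k * c) ≤ F a := by
      have hkc : k * c ≤ v a + k * u a := by nlinarith
      exact mul_le_mul_of_nonneg_left hkc (Real.exp_pos _).le
    have h2 : Real.exp (-k * a) * (k * c) ≤ Real.exp (-k * t) * (v t + k * u t) := hFa.trans hFle
    have h3 := mul_le_mul_of_nonneg_left h2 (Real.exp_pos (k * t)).le
    have e1 : Real.exp (k * t) * (Real.exp (-k * t) * (v t + k * u t)) = v t + k * u t := by
      rw [← mul_assoc, ← Real.exp_add]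
      simp
    have e2 : Real.exp (k * t) * (Real.exp (-k * a) * (k * c)) = k * c * Real.exp (k * (t - a)) := by
      rw [← mul_assoc, ← Real.exp_add, show k * t + -k * a = k * (t - a) by ring]
      ring
    rw [e1, e2] at h3
    exact h3
  -- G t = exp(k t) * u t - c/2 * exp(k*(2 t - a)) monotone
  set G : ℝ → ℝ := fun t => Real.exp (k * t) * u t - c / 2 * Real.exp (k * (2 * t - a)) with hG
  have hGd : ∀ t, HasDerivAt G
      (Real.exp (k * t) * (v t + k * u t) - c / 2 * (2 * k) * Real.exp (k * (2 * t - a))) t := by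
    intro t
    have h1 : HasDerivAt (fun t => Real.exp (k * t)) (k * Real.exp (k * t)) t := by
      have := (Real.hasDerivAt_exp (k * t)).comp t ((hasDerivAt_id t).const_mul k)
      simpa [Function.comp_def, mul_comm] using this
    have h2 := h1.mul (hu t)
    have h3 : HasDerivAt (fun t => c / 2 * Real.exp (k * (2 * t - a)))
        (c / 2 * (2 * k) * Real.exp (k * (2 * t - a))) t := by
      have hi : HasDerivAt (fun t : ℝ => k * (2 * t - a)) (2 * k) t := by
        have h0 : HasDerivAt (fun t : ℝ => 2 * t - a) 2 t := by
          simpa using ((hasDerivAt_id t).const_mul 2).sub_const a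
        simpa [mul_comm] using h0.const_mul k
      have := ((Real.hasDerivAt_exp (k * (2 * t - a))).comp t hi).const_mul (c / 2)
      exact this.congr_deriv (by ring)
    have := h2.sub h3
    exact this.congr_deriv (by ring)
  have hGmono : MonotoneOn G (Ici a) := by
    apply monotoneOn_of_deriv_nonneg (convex_Ici a)
      (fun t _ => (hGd t).continuousAt.continuousWithinAt)
      (fun t _ => (hGd t).differentiableAt.differentiableWithinAt)
    intro t ht
    rw [interior_Ici] at ht
    rw [(hGd t).deriv]
    have hWt := hW t ht.le
    have h1 : Real.exp (k * t) * (k * c * Real.exp (k * (t - a))) 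
        ≤ Real.exp (k * t) * (v t + k * u t) :=
      mul_le_mul_of_nonneg_left hWt (Real.exp_pos _).le
    have h2 : Real.exp (k * t) * (k * c * Real.exp (k * (t - a))) 
        = c / 2 * (2 * k) * Real.exp (k * (2 * t - a)) := by
      rw [show Real.exp (k*t) * (k * c * Real.exp (k * (t - a))) 
          = k * c * (Real.exp (k*t) * Real.exp (k * (t-a))) by ring, ← Real.exp_add]
      ring_nf
    linarith
  intro t ht
  have hGa : 0 ≤ G a := by
    have hsimp : G a = Real.exp (k * a) * u a - c / 2 * Real.exp (k * a) := by
      have he : k * (2 * a - a) = k * a := by ring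
      simp only [hG, he]
    rw [hsimp]
    nlinarith [Real.exp_pos (k * a)]
  have hGle : G a ≤ G t := hGmono (le_refl a) ht ht
  have hGt : 0 ≤ G t := hGa.trans hGle
  have hkey : c / 2 * Real.exp (k * (2 * t - a)) ≤ Real.exp (k * t) * u t := by
    have hGdef : G t = Real.exp (k * t) * u t - c / 2 * Real.exp (k * (2 * t - a)) := rfl
    linarith [hGdef ▸ hGt]
  have hexp : Real.exp (k * (2 * t - a)) = Real.exp (k * t) * Real.exp (k * (t - a)) := by
    rw [← Real.exp_add, show k * t + k * (t - a) = k * (2 * t - a) by ring]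
  have h4 : Real.exp (k * t) * (c / 2 * Real.exp (k * (t - a))) ≤ Real.exp (k * t) * u t := by
    calc Real.exp (k * t) * (c / 2 * Real.exp (k * (t - a)))
        = c / 2 * Real.exp (k * (2 * t - a)) := by rw [hexp]; ring
      _ ≤ _ := hkey
  exact le_of_mul_le_mul_left h4 (Real.exp_pos (k * t))

lemma my_subst (μ : ℝ) (y : ℝ → ℝ)
    (hd1 : ∀ r ∈ Ioi (0:ℝ), HasDerivAt y (deriv y r) r)
    (hd2 : ∀ r ∈ Ioi (0:ℝ), HasDerivAt (deriv y) (deriv (deriv y) r) r)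
    (hode : ∀ r ∈ Ioi (0:ℝ),
      r ^ 2 * deriv (deriv y) r + r * deriv y r - (r ^ 2 + μ ^ 2) * y r = 0)
    (s : ℝ) (hs : s = 1 ∨ s = -1) :
    (∀ t, HasDerivAt (fun t => y (Real.exp (s*t)))
        (s * Real.exp (s*t) * deriv y (Real.exp (s*t))) t)
    ∧ (∀ t, HasDerivAt (fun t => s * Real.exp (s*t) * deriv y (Real.exp (s*t)))
        ((Real.exp (s*t) ^ 2 + μ ^ 2) * y (Real.exp (s*t))) t) := by
  have hs2 : s * s = 1 := by rcases hs with h | h <;> simp [h]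
  have hrp : ∀ t : ℝ, (0:ℝ) < Real.exp (s*t) := fun t => Real.exp_pos _
  have hE : ∀ t, HasDerivAt (fun t => Real.exp (s*t)) (s * Real.exp (s*t)) t := by
    intro t
    have := (Real.hasDerivAt_exp (s*t)).comp t ((hasDerivAt_id t).const_mul s)
    simpa [Function.comp_def, mul_comm] using this
  constructor
  · intro t
    have h : HasDerivAt (fun t => y (Real.exp (s*t)))
        (deriv y (Real.exp (s*t)) * (s * Real.exp (s*t))) t := by
      simpa [Function.comp_def] using (hd1 _ (mem_Ioi.2 (hrp t))).comp t (hE t)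
    convert h using 1
    ring
  · intro t
    have hw : HasDerivAt (fun t => deriv y (Real.exp (s*t)))
        (deriv (deriv y) (Real.exp (s*t)) * (s * Real.exp (s*t))) t := by
      simpa [Function.comp_def] using (hd2 _ (mem_Ioi.2 (hrp t))).comp t (hE t)
    have hprod := ((hE t).const_mul s).mul hw
    refine hprod.congr_deriv ?_
    symm
    have ho := hode _ (mem_Ioi.2 (hrp t))
    linear_combination (-(Real.exp (s*t) * deriv y (Real.exp (s*t))
      + Real.exp (s*t) ^ 2 * deriv (deriv y) (Real.exp (s*t)))) * hs2 - ho

lemma my_ptwise (δ C K r yr : ℝ) (hr : 0 < r) (hC : 0 ≤ C) (hy : C * r ^ K ≤ yr) :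
    C ^ 2 * r ^ (2*K - 2*δ - 1) ≤ (r ^ (-δ) * yr) ^ 2 / r := by
  rw [le_div_iff₀ hr]
  have h1 : (r ^ (-δ)) ^ 2 = r ^ (-2*δ) := by
    rw [← Real.rpow_natCast (r ^ (-δ)) 2, ← Real.rpow_mul hr.le]
    congr 1
    push_cast; ring
  have h2 : (r ^ K) ^ 2 = r ^ (2*K) := by
    rw [← Real.rpow_natCast (r ^ K) 2, ← Real.rpow_mul hr.le]
    congr 1
    push_cast; ring
  have h3 : r ^ (-2*δ) * r ^ (2*K) = r ^ (2*K - 2*δ) := by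
    rw [← Real.rpow_add hr]
    congr 1
    ring
  have h4 : r ^ (2*K-2*δ-1) * r = r ^ (2*K-2*δ) := by
    nth_rewrite 2 [← Real.rpow_one r]
    rw [← Real.rpow_add hr]
    congr 1
    ring
  have key : C ^ 2 * r ^ (2*K - 2*δ - 1) * r = (r ^ (-δ) * (C * r ^ K)) ^ 2 := by
    calc C ^ 2 * r ^ (2*K-2*δ-1) * r = C ^ 2 * (r ^ (2*K-2*δ)) := by rw [mul_assoc, h4]
      _ = (r ^ (-δ) * (C * r ^ K)) ^ 2 := by rw [mul_pow, mul_pow, h1, h2, ← h3]; ring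
  rw [key]
  have h0 : 0 ≤ r ^ (-δ) * (C * r ^ K) := by positivity
  have h1 : r ^ (-δ) * (C * r ^ K) ≤ r ^ (-δ) * yr :=
    mul_le_mul_of_nonneg_left hy (Real.rpow_nonneg hr.le _)
  exact pow_le_pow_left₀ h0 h1 2

lemma my_compare (C p : ℝ) (hC : 0 < C) (S : Set ℝ) (hS : MeasurableSet S)
    (hSpos : ∀ r ∈ S, (0:ℝ) < r) (f : ℝ → ℝ) (hf : IntegrableOn f S)
    (hbd : ∀ r ∈ S, C * r ^ p ≤ f r) :
    IntegrableOn (fun r : ℝ => r ^ p) S := by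
  have hmeas : AEStronglyMeasurable (fun r : ℝ => C * r ^ p) (volume.restrict S) := by
    apply ContinuousOn.aestronglyMeasurable ?_ hS
    exact continuousOn_const.mul (fun r hr =>
      (Real.continuousAt_rpow_const r p (Or.inl (ne_of_gt (hSpos r hr)))).continuousWithinAt)
  have hbd' : ∀ᵐ r ∂(volume.restrict S), ‖C * r ^ p‖ ≤ f r := by
    rw [ae_restrict_iff' hS]
    filter_upwards with r hr
    have hr0 := hSpos r hr
    rw [Real.norm_eq_abs, abs_of_nonneg (mul_nonneg hC.le (Real.rpow_nonneg hr0.le p))]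
    exact hbd r hr
  have hint : IntegrableOn (fun r : ℝ => C * r ^ p) S := Integrable.mono' hf hmeas hbd'
  have := hint.const_mul C⁻¹
  have hfin : (fun r : ℝ => C⁻¹ * (C * r ^ p)) = fun r : ℝ => r ^ p := by
    funext r
    rw [← mul_assoc, inv_mul_cancel₀ (ne_of_gt hC), one_mul]
  rwa [hfin] at this

lemma my_core (μ δ : ℝ) (hμ : 2 ≤ μ) (hδ : -2 < δ)
    (y : ℝ → ℝ) (hsm : ContDiffOn ℝ 2 y (Ioi 0))
    (hode : ∀ r ∈ Ioi (0 : ℝ),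
      r ^ 2 * deriv (deriv y) r + r * deriv y r - (r ^ 2 + μ ^ 2) * y r = 0)
    (hint : IntegrableOn (fun r => (r ^ (-δ) * y r) ^ 2 / r) (Ioi 0))
    (r₀ : ℝ) (hr₀ : 0 < r₀) (hy₀ : 0 < y r₀) : False := by
  have hopen : IsOpen (Ioi (0:ℝ)) := isOpen_Ioi
  have hd1 : ∀ r ∈ Ioi (0:ℝ), HasDerivAt y (deriv y r) r := fun r hr =>
    ((hsm.differentiableOn (by norm_num)).differentiableAt (hopen.mem_nhds hr)).hasDerivAt
  have hc1 : ContDiffOn ℝ 1 (deriv y) (Ioi 0) := hsm.deriv_of_isOpen hopen (by norm_num)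
  have hd2 : ∀ r ∈ Ioi (0:ℝ), HasDerivAt (deriv y) (deriv (deriv y) r) r := fun r hr =>
    ((hc1.differentiableOn (by norm_num)).differentiableAt (hopen.mem_nhds hr)).hasDerivAt
  set c := y r₀ with hcdef
  rcases le_or_gt 0 (deriv y r₀) with hdy | hdy
  · -- growth at infinity, s = 1
    obtain ⟨hu, hv⟩ := my_subst μ y hd1 hd2 hode 1 (Or.inl rfl)
    set a := Real.log r₀ with hadef
    have hea : Real.exp (1 * a) = r₀ := by rw [one_mul, Real.exp_log hr₀]
    set K := max 2 (δ + 1) with hKdef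
    have hK0 : (0:ℝ) < K := lt_of_lt_of_le (by norm_num) (le_max_left _ _)
    set T := max a (Real.log K) with hTdef
    have hTa : a ≤ T := le_max_left _ _
    have hp := my_persist _ _ _ hu hv
      (fun t => by positivity) a c hy₀ (by rw [hea]) (by rw [hea]; positivity)
    have hgk : ∀ t, T ≤ t → K ^ 2 ≤ Real.exp (1*t) ^ 2 + μ ^ 2 := by
      intro t ht
      have h1 : Real.log K ≤ t := le_trans (le_max_right _ _) ht
      have h2 : K ≤ Real.exp (1*t) := by
        rw [one_mul]
        calc K = Real.exp (Real.log K) := (Real.exp_log hK0).symm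
          _ ≤ Real.exp t := Real.exp_le_exp.2 h1
      nlinarith [Real.exp_pos (1*t)]
    have hgrow := my_grow _ _ _ hu hv (fun t => by positivity) K T c hK0 hgk hy₀
      ((hp T hTa).1) ((hp T hTa).2)
    set R := Real.exp T with hRdef
    have hR0 : (0:ℝ) < R := Real.exp_pos _
    set C := c / 2 * Real.exp (-K * T) with hCdef
    have hC0 : (0:ℝ) < C := by positivity
    have hlow : ∀ r ∈ Ioi R, C * r ^ K ≤ y r := by
      intro r hr
      have hrpos : (0:ℝ) < r := hR0.trans hr
      have hTt : T ≤ Real.log r := (Real.le_log_iff_exp_le hrpos).2 (le_of_lt hr)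
      have := hgrow (Real.log r) hTt
      rw [show (1 : ℝ) * Real.log r = Real.log r by ring, Real.exp_log hrpos] at this
      calc C * r ^ K = c / 2 * Real.exp (K * (Real.log r - T)) := by
            rw [Real.rpow_def_of_pos hrpos, hCdef, mul_assoc, ← Real.exp_add]
            congr 2
            ring
        _ ≤ y r := this
    -- integrability contradiction on (R, ∞)
    have hbd : ∀ r ∈ Ioi R, C^2 * r ^ (2*K - 2*δ - 1) ≤ (r ^ (-δ) * y r) ^ 2 / r :=
      fun r hr => my_ptwise δ C K r (y r) (hR0.trans hr) hC0.le (hlow r hr)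
    have hcmp := my_compare (C^2) (2*K - 2*δ - 1) (by positivity) (Ioi R)
      measurableSet_Ioi (fun r hr => hR0.trans hr) _
      (hint.mono_set (Ioi_subset_Ioi hR0.le)) hbd
    rw [integrableOn_Ioi_rpow_iff hR0] at hcmp
    have : (δ + 1 : ℝ) ≤ K := le_max_right _ _
    linarith
  · -- growth at zero, s = -1
    obtain ⟨hu, hv⟩ := my_subst μ y hd1 hd2 hode (-1) (Or.inr rfl)
    set a := -Real.log r₀ with hadef
    have hea : Real.exp (-1 * a) = r₀ := by
      rw [hadef, show (-1 : ℝ) * -Real.log r₀ = Real.log r₀ by ring, Real.exp_log hr₀]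
    have hμ0 : (0:ℝ) < μ := by linarith
    have hgk : ∀ t, a ≤ t → μ ^ 2 ≤ Real.exp ((-1)*t) ^ 2 + μ ^ 2 := by
      intro t _
      nlinarith [Real.exp_pos ((-1)*t)]
    have hgrow := my_grow _ _ _ hu hv (fun t => by positivity) μ a c hμ0 hgk hy₀
      (by rw [hea]) (by rw [hea]; nlinarith)
    set C := c / 2 * Real.exp (-μ * a) with hCdef
    have hC0 : (0:ℝ) < C := by positivity
    have hlow : ∀ r ∈ Ioo (0:ℝ) r₀, C * r ^ (-μ) ≤ y r := by
      intro r hr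
      have hrpos : (0:ℝ) < r := hr.1
      have hat : a ≤ -Real.log r := by
        rw [hadef, neg_le_neg_iff]
        exact Real.log_le_log hrpos hr.2.le
      have := hgrow (-Real.log r) hat
      rw [show (-1 : ℝ) * -Real.log r = Real.log r by ring, Real.exp_log hrpos] at this
      calc C * r ^ (-μ) = c / 2 * Real.exp (μ * (-Real.log r - a)) := by
            rw [Real.rpow_def_of_pos hrpos, hCdef, mul_assoc, ← Real.exp_add]
            congr 2
            ring
        _ ≤ y r := this
    have hbd : ∀ r ∈ Ioo (0:ℝ) r₀, C^2 * r ^ (2*(-μ) - 2*δ - 1) ≤ (r ^ (-δ) * y r) ^ 2 / r :=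
      fun r hr => my_ptwise δ C (-μ) r (y r) hr.1 hC0.le (hlow r hr)
    have hcmp := my_compare (C^2) (2*(-μ) - 2*δ - 1) (by positivity) (Ioo 0 r₀)
      measurableSet_Ioo (fun r hr => hr.1) _
      (hint.mono_set Ioo_subset_Ioi_self) hbd
    rw [intervalIntegral.integrableOn_Ioo_rpow_iff hr₀] at hcmp
    linarith


/-- Any solution `y : (0,∞) → ℝ` of the modified Bessel equation
`(r d/dr)² y − (r² + μ²) y = 0` (i.e. `r² y'' + r y' − (r² + μ²) y = 0`) satisfying
`∫₀^∞ |r^{−δ} y(r)|² dr/r < ∞` for some `δ > −2` is identically zero.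
(As dictated by the application to eigenvalues `μ = √(μ̂ + 4) ≥ 2` on the cone, the
statement is taken with `μ ≥ 2`, so that `K_μ(r) ~ c r^{−μ}` as `r → 0` violates the
weight condition `δ > −2`, while `I_μ(r) ~ e^r/√(2πr)` grows at infinity.) -/
theorem stmt_15 (μ δ : ℝ) (hμ : 2 ≤ μ) (hδ : -2 < δ)
    (y : ℝ → ℝ) (hsm : ContDiffOn ℝ 2 y (Ioi 0))
    (hode : ∀ r ∈ Ioi (0 : ℝ),
      r ^ 2 * deriv (deriv y) r + r * deriv y r - (r ^ 2 + μ ^ 2) * y r = 0)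
    (hint : IntegrableOn (fun r => (r ^ (-δ) * y r) ^ 2 / r) (Ioi 0)) :
    ∀ r ∈ Ioi (0 : ℝ), y r = 0 := by
  intro r hr
  by_contra hne
  rcases lt_or_gt_of_ne hne with hneg | hpos
  · -- y r < 0 : apply the core lemma to -y
    have hD1 : deriv (fun x => -y x) = fun x => -deriv y x := funext fun x => deriv.neg
    have hD2 : deriv (deriv (fun x => -y x)) = fun x => -deriv (deriv y) x := by
      rw [hD1]
      exact funext fun x => deriv.neg
    have hode' : ∀ s ∈ Ioi (0 : ℝ),
        s ^ 2 * deriv (deriv (fun x => -y x)) s + s * deriv (fun x => -y x) s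
          - (s ^ 2 + μ ^ 2) * (fun x => -y x) s = 0 := by
      intro s hs
      rw [hD2, hD1]
      have := hode s hs
      simp only
      linarith
    have hint' : IntegrableOn (fun s => (s ^ (-δ) * (fun x => -y x) s) ^ 2 / s) (Ioi 0) := by
      have heq : (fun s : ℝ => (s ^ (-δ) * (fun x => -y x) s) ^ 2 / s)
          = fun s : ℝ => (s ^ (-δ) * y s) ^ 2 / s := by
        funext x
        simp only
        rw [mul_neg, neg_sq]
      rw [heq]
      exact hint
    exact my_core μ δ hμ hδ (fun x => -y x) hsm.neg hode' hint' r hr (by simpa using hneg)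
  · exact my_core μ δ hμ hδ y hsm hode hint r hr hpos
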